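/- There exist two simple curves γ₁, γ₂ in the unit disc ending at the same boundary point such that γ₁ ∼ γ₂ (i.e., γ₂ lies in a bounded hyperbolic neighbourhood of γ₁) but the Fréchet distance between γ₁ and γ₂ in the hyperbolic metric is infinite. -/

import Mathlib

open Complex Set Filter Topology

noncomputable section

def unitDisc : Set ℂ := {z : ℂ | ‖z‖ < 1}

def dph (z w : ℂ) : ℝ := ‖(z - w) / (1 - z * (starRingEnd ℂ) w)‖

def dhyp (z w : ℂ) : ℝ := Real.log ((1 + dph z w) / (1 - dph z w))

def phiM (w z : ℂ) : ℂ := (z + w) / (1 + z * (starRingEnd ℂ) w)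

/-- Curvilinear angle along `γ` with hyperbolic deflection `r`. -/
def DeltaH (r : ℝ) (γ : Set ℂ) : Set ℂ := ⋃ w ∈ γ, {z ∈ unitDisc | dhyp z w ≤ r}

/-- A simple curve in the unit disc terminating at the boundary point `p`. -/
structure SimpleCurve (p : ℂ) where
  toFun : ℝ → ℂ
  cont : ContinuousOn toFun (Set.Ico 0 1)
  inj : Set.InjOn toFun (Set.Ico 0 1)
  inDisc : ∀ t ∈ Set.Ico (0:ℝ) 1, toFun t ∈ unitDisc
  tends : Filter.Tendsto toFun (nhdsWithin 1 (Set.Ico 0 1)) (nhds p)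

def SimpleCurve.carrier {p : ℂ} (γ : SimpleCurve p) : Set ℂ := γ.toFun '' Set.Ico 0 1

def Lfun (x : ℝ) : ℝ := Real.log ((1 + x) / (1 - x))

lemma Lfun_mono {a b : ℝ} (ha : 0 ≤ a) (hab : a ≤ b) (hb : b < 1) : Lfun a ≤ Lfun b := by
  unfold Lfun
  apply Real.log_le_log (div_pos (by linarith) (by linarith))
  rw [div_le_div_iff₀ (by linarith) (by linarith)]
  nlinarith

lemma Lfun_nonneg {a : ℝ} (ha : 0 ≤ a) (ha1 : a < 1) : 0 ≤ Lfun a := by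
  apply Real.log_nonneg
  rw [le_div_iff₀ (by linarith)]; linarith

lemma dph_nonneg (z w : ℂ) : 0 ≤ dph z w := norm_nonneg _

lemma dph_comm (z w : ℂ) : dph z w = dph w z := by
  unfold dph
  rw [norm_div, norm_div]
  congr 1
  · exact norm_sub_rev _ _
  · rw [show (1 : ℂ) - z * (starRingEnd ℂ) w = (starRingEnd ℂ) (1 - w * (starRingEnd ℂ) z) by
      simp [map_sub, map_mul]; ring]
    exact Complex.norm_conj _

lemma dhyp_comm (z w : ℂ) : dhyp z w = dhyp w z := by unfold dhyp; rw [dph_comm]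

lemma chord_sq (z w : ℂ) :
    ‖z - w‖ ^ 2 = ‖z‖ ^ 2 + ‖w‖ ^ 2 - 2 * (z * (starRingEnd ℂ) w).re ∧
    ‖1 - z * (starRingEnd ℂ) w‖ ^ 2
      = 1 + ‖z‖ ^ 2 * ‖w‖ ^ 2 - 2 * (z * (starRingEnd ℂ) w).re := by
  constructor
  · rw [Complex.sq_norm, Complex.normSq_sub, Complex.sq_norm, Complex.sq_norm]
  · rw [Complex.sq_norm, Complex.normSq_sub]
    simp [Complex.normSq_mul, Complex.normSq_conj, Complex.sq_norm, Complex.normSq_apply]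
    ring

lemma abs_sub_lt_abs_one_sub {z w : ℂ} (hz : ‖z‖ < 1) (hw : ‖w‖ < 1) :
    ‖z - w‖ < ‖1 - z * (starRingEnd ℂ) w‖ := by
  have h := chord_sq z w
  have haz : 0 ≤ ‖z‖ := norm_nonneg _
  have haw : 0 ≤ ‖w‖ := norm_nonneg _
  have h1 : ‖z - w‖ ^ 2 < ‖1 - z * (starRingEnd ℂ) w‖ ^ 2 := by
    rw [h.1, h.2]
    nlinarith [mul_pos (show (0:ℝ) < 1 - ‖z‖ ^ 2 by nlinarith)
      (show (0:ℝ) < 1 - ‖w‖ ^ 2 by nlinarith)]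
  exact lt_of_pow_lt_pow_left₀ 2 (norm_nonneg _) h1

lemma dph_lt_one {z w : ℂ} (hz : ‖z‖ < 1) (hw : ‖w‖ < 1) : dph z w < 1 := by
  unfold dph
  rw [norm_div]
  have h := abs_sub_lt_abs_one_sub hz hw
  rw [div_lt_one (lt_of_le_of_lt (norm_nonneg _) h)]
  exact h

lemma dph_zero_left (w : ℂ) : dph 0 w = ‖w‖ := by
  unfold dph; simp

lemma dhyp_eq_Lfun (z w : ℂ) : dhyp z w = Lfun (dph z w) := rfl

lemma dhyp_zero_left (w : ℂ) : dhyp 0 w = Lfun (‖w‖) := by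
  rw [dhyp_eq_Lfun, dph_zero_left]

-- the chord inequality
lemma chord_ineq {z w : ℂ} (hz : ‖z‖ < 1) (hw : ‖w‖ < 1) :
    (‖w‖ - ‖z‖) * ‖1 - z * (starRingEnd ℂ) w‖
      ≤ (1 - ‖z‖ * ‖w‖) * ‖z - w‖ := by
  set a := ‖z‖ with haq
  set b := ‖w‖ with hbq
  set A := ‖z - w‖ with hAq
  set B := ‖1 - z * (starRingEnd ℂ) w‖ with hBq
  set s := (z * (starRingEnd ℂ) w).re with hsq
  have haz : 0 ≤ a := norm_nonneg _
  have haw : 0 ≤ b := norm_nonneg _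
  have hA0 : 0 ≤ A := norm_nonneg _
  have hB0 : 0 ≤ B := norm_nonneg _
  have h := chord_sq z w
  have hs : s ≤ a * b := by
    calc s ≤ ‖z * (starRingEnd ℂ) w‖ := Complex.re_le_norm _
    _ = a * b := by rw [norm_mul, Complex.norm_conj]
  rcases le_or_gt b a with hba | hab
  · have h1 : (b - a) * B ≤ 0 := mul_nonpos_of_nonpos_of_nonneg (by linarith) hB0
    have h2 : 0 ≤ (1 - a * b) * A := mul_nonneg (by nlinarith) hA0
    linarith
  · have hsq2 : ((b - a) * B) ^ 2 ≤ ((1 - a * b) * A) ^ 2 := by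
      have expand : ((1 - a*b) * A)^2 - ((b-a)*B)^2 = 2*(a*b - s)*(1-a^2)*(1-b^2) := by
        have h1 := h.1; have h2 := h.2
        nlinarith [h.1, h.2]
      nlinarith [mul_nonneg (mul_nonneg (show (0:ℝ) ≤ 2*(a*b - s) by linarith)
        (show (0:ℝ) ≤ 1 - a^2 by nlinarith)) (show (0:ℝ) ≤ 1 - b^2 by nlinarith)]
    have hy : 0 ≤ (1 - a*b) * A := mul_nonneg (by nlinarith) hA0
    have hx : 0 ≤ (b - a) * B := mul_nonneg (by linarith) hB0
    calc (b - a) * B = Real.sqrt (((b-a)*B)^2) := (Real.sqrt_sq hx).symm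
    _ ≤ Real.sqrt (((1-a*b)*A)^2) := Real.sqrt_le_sqrt hsq2
    _ = (1 - a*b) * A := Real.sqrt_sq hy

-- triangle from 0
lemma dhyp_triangle0 {z w : ℂ} (hz : ‖z‖ < 1) (hw : ‖w‖ < 1) :
    dhyp 0 w ≤ dhyp 0 z + dhyp z w := by
  set a := ‖z‖ with haq
  set b := ‖w‖ with hbq
  set d := dph z w with hdq
  have haz : 0 ≤ a := norm_nonneg _
  have haw : 0 ≤ b := norm_nonneg _
  have hd0 : 0 ≤ d := dph_nonneg _ _
  have hd1 : d < 1 := dph_lt_one hz hw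
  have hB : 0 < ‖1 - z * (starRingEnd ℂ) w‖ :=
    lt_of_le_of_lt (norm_nonneg _) (abs_sub_lt_abs_one_sub hz hw)
  have hkey : b + a * b * d ≤ a + d := by
    have h1 : b - a ≤ (1 - a * b) * d := by
      have h2 := chord_ineq hz hw
      have h3 : d = ‖z - w‖ / ‖1 - z * (starRingEnd ℂ) w‖ := by
        rw [hdq]; unfold dph; rw [norm_div]
      rw [h3, ← mul_div_assoc, le_div_iff₀ hB]
      linarith
    nlinarith
  rw [dhyp_zero_left, dhyp_zero_left, dhyp_eq_Lfun, ← hbq, ← haq, ← hdq]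
  unfold Lfun
  rw [← Real.log_mul (ne_of_gt (div_pos (by linarith) (by linarith))) (ne_of_gt (div_pos (by linarith) (by linarith)))]
  apply Real.log_le_log (div_pos (by linarith) (by linarith))
  rw [div_mul_div_comm, div_le_div_iff₀ (by linarith) (mul_pos (by linarith) (by linarith))]
  nlinarith

def ufun (t : ℝ) : ℝ := (2 + Real.sin (1 / (1 - t))) / Real.sqrt (1 - t)
def xfun (t : ℝ) : ℝ := 1 - 2 / (Real.exp (ufun t) + 1)
def yfun (t : ℝ) : ℝ := Real.exp (-4 / Real.sqrt (1 - t)) / 2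
def g2fun (t : ℝ) : ℂ := (xfun t : ℂ) + (yfun t : ℂ) * Complex.I

lemma s_pos {t : ℝ} (ht : t ∈ Set.Ico (0:ℝ) 1) : 0 < 1 - t := by
  have := ht.2; linarith

lemma sqrt_s_pos {t : ℝ} (ht : t ∈ Set.Ico (0:ℝ) 1) : 0 < Real.sqrt (1 - t) :=
  Real.sqrt_pos.mpr (s_pos ht)

lemma u_lb {t : ℝ} (ht : t ∈ Set.Ico (0:ℝ) 1) : 1 / Real.sqrt (1 - t) ≤ ufun t := by
  unfold ufun
  gcongr
  linarith [Real.neg_one_le_sin (1 / (1 - t))]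

lemma u_ub {t : ℝ} (ht : t ∈ Set.Ico (0:ℝ) 1) : ufun t ≤ 3 / Real.sqrt (1 - t) := by
  unfold ufun
  gcongr
  linarith [Real.sin_le_one (1 / (1 - t))]

lemma u_pos {t : ℝ} (ht : t ∈ Set.Ico (0:ℝ) 1) : 0 < ufun t :=
  lt_of_lt_of_le (div_pos one_pos (sqrt_s_pos ht)) (u_lb ht)

lemma exp_u_gt_one {t : ℝ} (ht : t ∈ Set.Ico (0:ℝ) 1) : 1 < Real.exp (ufun t) := by
  calc (1:ℝ) = Real.exp 0 := Real.exp_zero.symm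
  _ < Real.exp (ufun t) := Real.exp_lt_exp.mpr (u_pos ht)

lemma one_sub_x {t : ℝ} : 1 - xfun t = 2 / (Real.exp (ufun t) + 1) := by
  unfold xfun; ring

lemma x_mem {t : ℝ} (ht : t ∈ Set.Ico (0:ℝ) 1) : xfun t ∈ Set.Ico (0:ℝ) 1 := by
  have hE : 1 < Real.exp (ufun t) := exp_u_gt_one ht
  constructor
  · unfold xfun
    rw [sub_nonneg, div_le_one (by linarith)]
    linarith
  · unfold xfun
    have : 0 < 2 / (Real.exp (ufun t) + 1) := by positivity
    linarith

lemma ratio_x {t : ℝ} (ht : t ∈ Set.Ico (0:ℝ) 1) :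
    (1 + xfun t) / (1 - xfun t) = Real.exp (ufun t) := by
  have hE : 0 < Real.exp (ufun t) := Real.exp_pos _
  rw [one_sub_x]
  unfold xfun
  field_simp
  ring

lemma y_pos {t : ℝ} : 0 < yfun t := by unfold yfun; positivity

lemma y_le {t : ℝ} (ht : t ∈ Set.Ico (0:ℝ) 1) : yfun t ≤ (1 - xfun t) / 2 := by
  rw [one_sub_x]
  unfold yfun
  gcongr
  rw [le_div_iff₀ (show (0:ℝ) < Real.exp (ufun t) + 1 by positivity)]
  have h1 : Real.exp (ufun t) ≤ Real.exp (3 / Real.sqrt (1 - t)) := Real.exp_le_exp.mpr (u_ub ht)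
  have h2 : Real.exp (3 / Real.sqrt (1 - t)) + 1 ≤ 2 * Real.exp (4 / Real.sqrt (1 - t)) := by
    have e1 : Real.exp (3 / Real.sqrt (1 - t)) ≤ Real.exp (4 / Real.sqrt (1 - t)) := by
      apply Real.exp_le_exp.mpr
      gcongr
      norm_num
    have e2 : (1:ℝ) ≤ Real.exp (4 / Real.sqrt (1 - t)) :=
      Real.one_le_exp (by positivity)
    linarith
  have hprod : Real.exp (-4 / Real.sqrt (1 - t)) * Real.exp (4 / Real.sqrt (1 - t)) = 1 := by
    rw [← Real.exp_add]
    ring_nf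
    exact Real.exp_zero
  calc Real.exp (-4 / Real.sqrt (1 - t)) * (Real.exp (ufun t) + 1)
      ≤ Real.exp (-4 / Real.sqrt (1 - t)) * (2 * Real.exp (4 / Real.sqrt (1 - t))) := by
        apply mul_le_mul_of_nonneg_left (by linarith) (Real.exp_pos _).le
  _ = 2 * (Real.exp (-4 / Real.sqrt (1 - t)) * Real.exp (4 / Real.sqrt (1 - t))) := by ring
  _ = 2 := by rw [hprod]; norm_num

lemma g2_re {t : ℝ} : (g2fun t).re = xfun t := by simp [g2fun]
lemma g2_im {t : ℝ} : (g2fun t).im = yfun t := by simp [g2fun]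

lemma abs_g2_le {t : ℝ} (ht : t ∈ Set.Ico (0:ℝ) 1) :
    ‖g2fun t‖ ≤ (1 + xfun t) / 2 := by
  have h1 : ‖g2fun t‖ ≤ xfun t + yfun t := by
    unfold g2fun
    calc ‖((xfun t : ℂ) + (yfun t : ℂ) * Complex.I)‖
        ≤ ‖(xfun t : ℂ)‖ + ‖((yfun t : ℂ) * Complex.I)‖ :=
          norm_add_le _ _
    _ = |xfun t| + |yfun t| := by simp
    _ = xfun t + yfun t := by
        rw [_root_.abs_of_nonneg (x_mem ht).1, _root_.abs_of_nonneg (le_of_lt y_pos)]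
  linarith [y_le ht]

lemma abs_g2_lt_one {t : ℝ} (ht : t ∈ Set.Ico (0:ℝ) 1) : ‖g2fun t‖ < 1 := by
  have := abs_g2_le ht
  have := (x_mem ht).2
  linarith

lemma x_le_abs_g2 {t : ℝ} (ht : t ∈ Set.Ico (0:ℝ) 1) : xfun t ≤ ‖g2fun t‖ := by
  calc xfun t = (g2fun t).re := g2_re.symm
  _ ≤ ‖g2fun t‖ := Complex.re_le_norm _

lemma y_anti {t₁ t₂ : ℝ} (h1 : t₁ ∈ Set.Ico (0:ℝ) 1) (h2 : t₂ ∈ Set.Ico (0:ℝ) 1)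
    (h : t₁ < t₂) : yfun t₂ < yfun t₁ := by
  unfold yfun
  have hs1 : 0 < 1 - t₁ := s_pos h1
  have hs2 : 0 < 1 - t₂ := s_pos h2
  have hq1 : 0 < Real.sqrt (1 - t₁) := Real.sqrt_pos.mpr hs1
  have hq2 : 0 < Real.sqrt (1 - t₂) := Real.sqrt_pos.mpr hs2
  have hq : Real.sqrt (1 - t₂) < Real.sqrt (1 - t₁) :=
    Real.sqrt_lt_sqrt hs2.le (by linarith)
  have key : Real.exp (-4 / Real.sqrt (1 - t₂)) < Real.exp (-4 / Real.sqrt (1 - t₁)) := by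
    apply Real.exp_lt_exp.mpr
    rw [div_lt_div_iff₀ hq2 hq1, neg_mul, neg_mul, neg_lt_neg_iff]
    nlinarith
  linarith

-- continuity
lemma u_contOn : ContinuousOn ufun (Set.Ico (0:ℝ) 1) := by
  unfold ufun
  have h1 : ContinuousOn (fun t : ℝ => 1 - t) (Set.Ico (0:ℝ) 1) := by fun_prop
  have hne : ∀ t ∈ Set.Ico (0:ℝ) 1, 1 - t ≠ 0 := fun t ht => (s_pos ht).ne'
  have hsq : ContinuousOn (fun t : ℝ => Real.sqrt (1 - t)) (Set.Ico (0:ℝ) 1) :=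
    Real.continuous_sqrt.comp_continuousOn h1
  have hsqne : ∀ t ∈ Set.Ico (0:ℝ) 1, Real.sqrt (1 - t) ≠ 0 :=
    fun t ht => (Real.sqrt_pos.mpr (s_pos ht)).ne'
  exact ((continuousOn_const.add (Real.continuous_sin.comp_continuousOn
    (continuousOn_const.div h1 hne))).div hsq hsqne)

lemma x_contOn : ContinuousOn xfun (Set.Ico (0:ℝ) 1) := by
  unfold xfun
  apply continuousOn_const.sub
  apply continuousOn_const.div ((Real.continuous_exp.comp_continuousOn u_contOn).add continuousOn_const)
  intro t ht
  exact (by positivity : (0:ℝ) < Real.exp (ufun t) + 1).ne'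

lemma y_contOn : ContinuousOn yfun (Set.Ico (0:ℝ) 1) := by
  unfold yfun
  have h1 : ContinuousOn (fun t : ℝ => 1 - t) (Set.Ico (0:ℝ) 1) := by fun_prop
  have hsq : ContinuousOn (fun t : ℝ => Real.sqrt (1 - t)) (Set.Ico (0:ℝ) 1) :=
    Real.continuous_sqrt.comp_continuousOn h1
  have hsqne : ∀ t ∈ Set.Ico (0:ℝ) 1, Real.sqrt (1 - t) ≠ 0 :=
    fun t ht => (Real.sqrt_pos.mpr (s_pos ht)).ne'
  exact (Real.continuous_exp.comp_continuousOn (continuousOn_const.div hsq hsqne)).div_const 2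

lemma g2_contOn : ContinuousOn g2fun (Set.Ico (0:ℝ) 1) := by
  unfold g2fun
  exact (Complex.continuous_ofReal.comp_continuousOn x_contOn).add
    ((Complex.continuous_ofReal.comp_continuousOn y_contOn).mul continuousOn_const)

-- limits
lemma invsqrt_tendsto :
    Tendsto (fun t : ℝ => 1 / Real.sqrt (1 - t)) (nhdsWithin 1 (Set.Ico 0 1)) atTop := by
  have h0 : Tendsto (fun t : ℝ => Real.sqrt (1 - t)) (nhdsWithin 1 (Set.Ico 0 1)) (nhdsWithin 0 (Set.Ioi 0)) := by
    rw [tendsto_nhdsWithin_iff]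
    constructor
    · have : Tendsto (fun t : ℝ => Real.sqrt (1 - t)) (nhds 1) (nhds 0) := by
        have : Tendsto (fun t : ℝ => 1 - t) (nhds 1) (nhds 0) := by
          have := ((continuous_const.sub continuous_id : Continuous fun t : ℝ => 1 - t).tendsto (1:ℝ))
          rw [show (0:ℝ) = 1 - 1 by norm_num]; exact this
        rw [show (0:ℝ) = Real.sqrt 0 by simp]; exact (Real.continuous_sqrt.tendsto 0).comp this
      exact this.mono_left nhdsWithin_le_nhds
    · filter_upwards [self_mem_nhdsWithin] with t ht
      exact Real.sqrt_pos.mpr (s_pos ht)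
  have := tendsto_inv_nhdsGT_zero.comp h0
  simp only [one_div]; exact this

lemma u_tendsto : Tendsto ufun (nhdsWithin 1 (Set.Ico 0 1)) atTop := by
  apply tendsto_atTop_mono' _ _ invsqrt_tendsto
  filter_upwards [self_mem_nhdsWithin] with t ht
  unfold ufun
  gcongr
  linarith [Real.neg_one_le_sin (1 / (1 - t))]

lemma x_tendsto : Tendsto xfun (nhdsWithin 1 (Set.Ico 0 1)) (nhds 1) := by
  unfold xfun
  have h1 : Tendsto (fun t => Real.exp (ufun t) + 1) (nhdsWithin 1 (Set.Ico 0 1)) atTop :=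
    (Real.tendsto_exp_atTop.comp u_tendsto).atTop_add tendsto_const_nhds
  have h2 : Tendsto (fun t => 2 / (Real.exp (ufun t) + 1)) (nhdsWithin 1 (Set.Ico 0 1)) (nhds 0) := by
    have := h1.inv_tendsto_atTop.const_mul (2:ℝ); simp only [div_eq_mul_inv]; simpa using this
  simpa using tendsto_const_nhds.sub h2

lemma y_tendsto : Tendsto yfun (nhdsWithin 1 (Set.Ico 0 1)) (nhds 0) := by
  unfold yfun
  have h1 : Tendsto (fun t : ℝ => -4 / Real.sqrt (1 - t)) (nhdsWithin 1 (Set.Ico 0 1)) atBot := by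
    have h2 : Tendsto (fun t : ℝ => 4 * (1 / Real.sqrt (1 - t))) (nhdsWithin 1 (Set.Ico 0 1)) atTop :=
      invsqrt_tendsto.const_mul_atTop (show (0:ℝ) < 4 by norm_num)
    have h3 := tendsto_neg_atTop_atBot.comp h2
    have heq : (fun t : ℝ => -4 / Real.sqrt (1 - t)) = (fun t : ℝ => -(4 * (1 / Real.sqrt (1 - t)))) := by
      funext t; ring
    rw [heq]
    exact h3
  have h2 : Tendsto (fun t : ℝ => Real.exp (-4 / Real.sqrt (1 - t))) (nhdsWithin 1 (Set.Ico 0 1)) (nhds 0) :=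
    Real.tendsto_exp_atBot.comp h1
  simpa using h2.div_const 2

lemma g2_tendsto : Tendsto g2fun (nhdsWithin 1 (Set.Ico 0 1)) (nhds 1) := by
  unfold g2fun
  have hx := Complex.continuous_ofReal.tendsto 1 |>.comp x_tendsto
  have hy := Complex.continuous_ofReal.tendsto 0 |>.comp y_tendsto
  have := hx.add ((hy.mul_const Complex.I))
  simpa using this


lemma Lfun_x {t : ℝ} (ht : t ∈ Set.Ico (0:ℝ) 1) : Lfun (xfun t) = ufun t := by
  unfold Lfun
  rw [ratio_x ht, Real.log_exp]

lemma g2_inj : Set.InjOn g2fun (Set.Ico (0:ℝ) 1) := by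
  intro t1 h1 t2 h2 heq
  by_contra hne
  rcases lt_or_gt_of_ne hne with h | h
  · have := y_anti h1 h2 h
    have him : (g2fun t1).im = (g2fun t2).im := by rw [heq]
    rw [g2_im, g2_im] at him
    linarith
  · have := y_anti h2 h1 h
    have him : (g2fun t1).im = (g2fun t2).im := by rw [heq]
    rw [g2_im, g2_im] at him
    linarith

def gamma1 : SimpleCurve 1 where
  toFun := fun t => (t : ℂ)
  cont := Complex.continuous_ofReal.continuousOn
  inj := fun _ _ _ _ h => Complex.ofReal_injective h
  inDisc := by
    intro t ht
    simp only [unitDisc, Set.mem_setOf_eq, Complex.norm_real, Real.norm_eq_abs]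
    rw [_root_.abs_of_nonneg ht.1]
    exact ht.2
  tends := by
    have := (Complex.continuous_ofReal.tendsto 1).mono_left
      (nhdsWithin_le_nhds (s := Set.Ico (0:ℝ) 1))
    simpa using this

def gamma2 : SimpleCurve 1 where
  toFun := g2fun
  cont := g2_contOn
  inj := g2_inj
  inDisc := fun t ht => abs_g2_lt_one ht
  tends := g2_tendsto

lemma mem_carrier1 {s : ℝ} (hs : s ∈ Set.Ico (0:ℝ) 1) : ((s:ℝ):ℂ) ∈ gamma1.carrier :=
  ⟨s, hs, rfl⟩

lemma carrier1_spec {z : ℂ} (hz : z ∈ gamma1.carrier) : z = ((z.re : ℝ) : ℂ) ∧ z.re ∈ Set.Ico (0:ℝ) 1 := by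
  obtain ⟨t, ht, rfl⟩ := hz
  constructor
  · simp [gamma1]
  · simpa [gamma1] using ht

lemma abs_ofReal_Ico {s : ℝ} (hs : s ∈ Set.Ico (0:ℝ) 1) : ‖((s:ℝ):ℂ)‖ = s := by
  rw [Complex.norm_real, Real.norm_eq_abs, _root_.abs_of_nonneg hs.1]

lemma near {t : ℝ} (ht : t ∈ Set.Ico (0:ℝ) 1) :
    dhyp (g2fun t) ((xfun t : ℝ) : ℂ) ≤ Real.log 3 := by
  have hx := x_mem ht
  have hy := @y_pos t
  have hyle := y_le ht
  have hnum : ‖(g2fun t - ((xfun t : ℝ) : ℂ))‖ = yfun t := by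
    have : g2fun t - ((xfun t : ℝ) : ℂ) = (yfun t : ℂ) * Complex.I := by
      unfold g2fun; ring
    rw [this, norm_mul, Complex.norm_I, Complex.norm_real, Real.norm_eq_abs, _root_.abs_of_nonneg hy.le, mul_one]
  have hden_re : (1 - g2fun t * (starRingEnd ℂ) ((xfun t : ℝ) : ℂ)).re = 1 - xfun t * xfun t := by
    rw [Complex.conj_ofReal]
    simp [g2fun, Complex.mul_re]
  have hdpos : 0 < 1 - xfun t * xfun t := by nlinarith [hx.1, hx.2]
  have hden : 1 - xfun t * xfun t ≤ ‖(1 - g2fun t * (starRingEnd ℂ) ((xfun t : ℝ) : ℂ))‖ := by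
    rw [← hden_re]; exact Complex.re_le_norm _
  have hdph : dph (g2fun t) ((xfun t : ℝ) : ℂ) ≤ (1:ℝ)/2 := by
    unfold dph
    rw [norm_div, hnum]
    calc yfun t / ‖(1 - g2fun t * (starRingEnd ℂ) ((xfun t : ℝ) : ℂ))‖
        ≤ yfun t / (1 - xfun t * xfun t) := by gcongr
    _ ≤ (1:ℝ)/2 := by
        rw [div_le_div_iff₀ hdpos (by norm_num)]
        nlinarith [hx.1, hx.2]
  calc dhyp (g2fun t) ((xfun t : ℝ) : ℂ) = Lfun (dph (g2fun t) ((xfun t : ℝ) : ℂ)) := rfl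
  _ ≤ Lfun (1/2) := Lfun_mono (dph_nonneg _ _) hdph (by norm_num)
  _ = Real.log 3 := by unfold Lfun; norm_num

lemma Lfun_half_ub {t : ℝ} (ht : t ∈ Set.Ico (0:ℝ) 1) :
    Lfun ((1 + xfun t) / 2) ≤ Real.log 4 + ufun t := by
  rw [← Lfun_x ht]
  unfold Lfun
  have hx := x_mem ht
  rw [← Real.log_mul (by norm_num) (ne_of_gt (div_pos (by linarith [hx.1]) (by linarith [hx.2])))]
  apply Real.log_le_log
  · apply div_pos <;> nlinarith [hx.1, hx.2]
  · have h1 : (1 + (1 + xfun t) / 2) / (1 - (1 + xfun t) / 2) = (3 + xfun t) / (1 - xfun t) := by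
      rw [div_eq_div_iff (by linarith [hx.2]) (by linarith [hx.2])]
      ring
    rw [h1, mul_div_assoc']
    gcongr
    · linarith [hx.2]
    · linarith [hx.1]

-- monotone bijections of [0,1) are increasing
lemma aux_mono {g : ℝ → ℝ} (hc : ContinuousOn g (Set.Ico 0 1)) (hi : Set.InjOn g (Set.Ico 0 1))
    (hmaps : ∀ t ∈ Set.Ico (0:ℝ) 1, g t ∈ Set.Ico (0:ℝ) 1)
    (hsurj : ∀ τ ∈ Set.Ico (0:ℝ) 1, ∃ t ∈ Set.Ico (0:ℝ) 1, g t = τ)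
    {a b : ℝ} (ha : a ∈ Set.Ico (0:ℝ) 1) (hb : b ∈ Set.Ico (0:ℝ) 1) (hab : a < b) : g a < g b := by
  have h0 : (0:ℝ) ∈ Set.Ico (0:ℝ) 1 := ⟨le_refl 0, one_pos⟩
  have hg0 := hmaps 0 h0
  obtain ⟨t', ht', hgt'⟩ := hsurj ((g 0 + 1)/2) ⟨by linarith [hg0.1], by linarith [hg0.2]⟩
  set c := max b t' with hcdef
  have hc1 : c ∈ Set.Ico (0:ℝ) 1 := ⟨le_trans hb.1 (le_max_left _ _), max_lt hb.2 ht'.2⟩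
  have hsub : Set.Icc (0:ℝ) c ⊆ Set.Ico (0:ℝ) 1 := fun x hx => ⟨hx.1, lt_of_le_of_lt hx.2 hc1.2⟩
  have hdi := ContinuousOn.strictMonoOn_of_injOn_Icc' hc1.1 (hc.mono hsub) (hi.mono hsub)
  rcases hdi with hmono | hanti
  · exact hmono ⟨ha.1, le_trans hab.le (le_max_left b t')⟩ ⟨hb.1, le_max_left b t'⟩ hab
  · exfalso
    have ht'0 : 0 < t' := by
      rcases eq_or_lt_of_le ht'.1 with h | h
      · exfalso
        rw [← h] at hgt'
        have := hg0.2
        linarith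
      · exact h
    have := hanti ⟨le_refl 0, hc1.1⟩ ⟨ht'.1, le_max_right b t'⟩ ht'0
    rw [hgt'] at this
    linarith [hg0.2]

lemma ufun_at {θ : ℝ} (hθ : 1 ≤ θ) : ufun (1 - 1/θ) = (2 + Real.sin θ) * Real.sqrt θ := by
  have h0 : (0:ℝ) < θ := by linarith
  unfold ufun
  have h1 : 1 - (1 - 1/θ) = 1/θ := by ring
  rw [h1]
  rw [one_div, one_div, inv_inv, Real.sqrt_inv, div_eq_mul_inv, inv_inv]

lemma mem_at {θ : ℝ} (hθ : 1 ≤ θ) : 1 - 1/θ ∈ Set.Ico (0:ℝ) 1 := by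
  have h0 : (0:ℝ) < θ := by linarith
  constructor
  · have : 1/θ ≤ 1 := by rw [div_le_one h0]; exact hθ
    linarith
  · have : 0 < 1/θ := by positivity
    linarith

lemma exists_gap (M : ℝ) : ∃ ta tb : ℝ, ta ∈ Set.Ico (0:ℝ) 1 ∧ tb ∈ Set.Ico (0:ℝ) 1 ∧ ta < tb ∧
    ufun tb + Real.log 4 + 2*M < ufun ta := by
  set c := max 0 ((Real.log 4 + 2*M + 2)/2) + 1 with hcdef
  clear_value c
  have hc0 : 0 ≤ c := by
    have := le_max_left (0:ℝ) ((Real.log 4 + 2*M + 2)/2)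
    linarith
  obtain ⟨N, hN⟩ := exists_nat_gt (c^2)
  have hpi := Real.pi_gt_three
  set θ := Real.pi/2 + N * (2 * Real.pi) with hθdef
  clear_value θ
  have hθ1 : 1 ≤ θ := by
    have : (0:ℝ) ≤ N * (2*Real.pi) := by positivity
    linarith
  have hθN : (N:ℝ) ≤ θ := by
    have h6 : (1:ℝ) ≤ 2*Real.pi := by linarith
    nlinarith [Nat.cast_nonneg (α := ℝ) N]
  have hθc : c^2 ≤ θ := by linarith
  have hsqc : c ≤ Real.sqrt θ := by
    rw [show c = Real.sqrt (c^2) from (Real.sqrt_sq hc0).symm]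
    exact Real.sqrt_le_sqrt hθc
  have hθpos : (0:ℝ) < θ := by linarith
  refine ⟨1 - 1/θ, 1 - 1/(θ + Real.pi), mem_at hθ1, mem_at (by linarith), ?_, ?_⟩
  · have : 1/(θ + Real.pi) < 1/θ := by
      apply one_div_lt_one_div_of_lt hθpos
      linarith
    linarith
  · rw [ufun_at hθ1, ufun_at (by linarith : (1:ℝ) ≤ θ + Real.pi)]
    have hsin1 : Real.sin θ = 1 := by
      rw [hθdef, Real.sin_add_nat_mul_two_pi, Real.sin_pi_div_two]
    have hsin2 : Real.sin (θ + Real.pi) = -1 := by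
      rw [Real.sin_add_pi, hsin1]
    rw [hsin1, hsin2]
    have hsq : Real.sqrt (θ + Real.pi) ≤ Real.sqrt θ + 2 := by
      have h1 : θ + Real.pi ≤ (Real.sqrt θ + 2)^2 := by
        have := Real.sq_sqrt hθpos.le
        have hpi4 := Real.pi_le_four
        nlinarith [Real.sqrt_nonneg θ]
      calc Real.sqrt (θ + Real.pi) ≤ Real.sqrt ((Real.sqrt θ + 2)^2) := Real.sqrt_le_sqrt h1
      _ = Real.sqrt θ + 2 := Real.sqrt_sq (by positivity)
    have hc2 : Real.log 4 + 2*M + 2 ≤ 2*(c - 1) := by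
      have h := le_max_right (0:ℝ) ((Real.log 4 + 2*M + 2)/2)
      rw [hcdef]
      linarith
    have : Real.log 4 + 2*M + 2 ≤ 2*Real.sqrt θ - 2 := by linarith
    nlinarith [Real.sqrt_nonneg θ]


lemma g2_lb {t : ℝ} (ht : t ∈ Set.Ico (0:ℝ) 1) : ufun t ≤ dhyp 0 (g2fun t) := by
  rw [dhyp_zero_left, ← Lfun_x ht]
  exact Lfun_mono (x_mem ht).1 (x_le_abs_g2 ht) (abs_g2_lt_one ht)

lemma g2_ub {t : ℝ} (ht : t ∈ Set.Ico (0:ℝ) 1) : dhyp 0 (g2fun t) ≤ Real.log 4 + ufun t := by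
  rw [dhyp_zero_left]
  have h1 : Lfun (‖g2fun t‖) ≤ Lfun ((1 + xfun t)/2) :=
    Lfun_mono (norm_nonneg _) (abs_g2_le ht)
      (by have := (x_mem ht).2; linarith)
  exact le_trans h1 (Lfun_half_ub ht)

theorem stmt_5 : ∃ (p : ℂ), ‖p‖ = 1 ∧ ∃ γ₁ γ₂ : SimpleCurve p,
    (∃ r : ℝ, 0 < r ∧ γ₂.carrier ⊆ DeltaH r γ₁.carrier) ∧
    ¬ ∃ (e : γ₁.carrier ≃ₜ γ₂.carrier) (M : ℝ),
        ∀ z : γ₁.carrier, dhyp (z : ℂ) ((e z : ℂ)) ≤ M := by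
  refine ⟨1, by simp, gamma1, gamma2, ⟨Real.log 3, Real.log_pos (by norm_num), ?_⟩, ?_⟩
  · rintro z ⟨t, ht, rfl⟩
    apply Set.mem_biUnion (mem_carrier1 (x_mem ht))
    exact ⟨abs_g2_lt_one ht, near ht⟩
  · rintro ⟨e, M, hM⟩
    classical
    have mem2 : ∀ {t : ℝ}, t ∈ Set.Ico (0:ℝ) 1 → g2fun t ∈ gamma2.carrier :=
      fun ht => ⟨_, ht, rfl⟩
    set g : ℝ → ℝ := fun t => if h : t ∈ Set.Ico (0:ℝ) 1
      then ((e.symm ⟨g2fun t, mem2 h⟩ : ℂ)).re else 0 with hgdef0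
    have hgdef : ∀ t (h : t ∈ Set.Ico (0:ℝ) 1),
        g t = ((e.symm ⟨g2fun t, mem2 h⟩ : ℂ)).re := by
      intro t h
      rw [hgdef0]
      simp only [dif_pos h]
    have hgmem : ∀ t ∈ Set.Ico (0:ℝ) 1, g t ∈ Set.Ico (0:ℝ) 1 := by
      intro t h
      rw [hgdef t h]
      exact (carrier1_spec (e.symm ⟨g2fun t, mem2 h⟩).2).2
    have hval : ∀ t (h : t ∈ Set.Ico (0:ℝ) 1),
        ((e.symm ⟨g2fun t, mem2 h⟩ : ℂ)) = ((g t : ℝ) : ℂ) := by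
      intro t h
      rw [hgdef t h]
      exact (carrier1_spec (e.symm ⟨g2fun t, mem2 h⟩).2).1
    have hge : ∀ t (h : t ∈ Set.Ico (0:ℝ) 1),
        (e ⟨((g t:ℝ):ℂ), mem_carrier1 (hgmem t h)⟩ : ℂ) = g2fun t := by
      intro t h
      have heq : (⟨((g t:ℝ):ℂ), mem_carrier1 (hgmem t h)⟩ : gamma1.carrier)
          = e.symm ⟨g2fun t, mem2 h⟩ := Subtype.ext (hval t h).symm
      rw [heq, Homeomorph.apply_symm_apply]
    have hgc : ContinuousOn g (Set.Ico (0:ℝ) 1) := by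
      rw [continuousOn_iff_continuous_restrict]
      have hrestr : (Set.Ico (0:ℝ) 1).restrict g
          = fun t : Set.Ico (0:ℝ) 1 => ((e.symm ⟨g2fun t, mem2 t.2⟩ : ℂ)).re := by
        funext t
        exact hgdef t t.2
      show Continuous ((Set.Ico (0:ℝ) 1).restrict g); rw [hrestr]
      exact Complex.continuous_re.comp (continuous_subtype_val.comp
        (e.symm.continuous.comp (Continuous.subtype_mk g2_contOn.restrict _)))
    have hgi : Set.InjOn g (Set.Ico (0:ℝ) 1) := by
      intro t1 h1 t2 h2 heq
      have e1 : (e.symm ⟨g2fun t1, mem2 h1⟩) = (e.symm ⟨g2fun t2, mem2 h2⟩) := by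
        apply Subtype.ext
        rw [hval t1 h1, hval t2 h2, heq]
      have e2 : g2fun t1 = g2fun t2 := by
        have := e.symm.injective e1
        exact congrArg Subtype.val this
      exact g2_inj h1 h2 e2
    have hgs : ∀ τ ∈ Set.Ico (0:ℝ) 1, ∃ t ∈ Set.Ico (0:ℝ) 1, g t = τ := by
      intro τ hτ
      obtain ⟨t', ht', hEq⟩ := (e ⟨((τ:ℝ):ℂ), mem_carrier1 hτ⟩).2
      refine ⟨t', ht', ?_⟩
      rw [hgdef t' ht']
      have heq : (⟨g2fun t', mem2 ht'⟩ : gamma2.carrier) = e ⟨((τ:ℝ):ℂ), mem_carrier1 hτ⟩ :=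
        Subtype.ext hEq
      rw [heq, Homeomorph.symm_apply_apply]
      simp
    have hdisp : ∀ t ∈ Set.Ico (0:ℝ) 1, dhyp ((g t : ℝ):ℂ) (g2fun t) ≤ M := by
      intro t h
      have := hM ⟨((g t:ℝ):ℂ), mem_carrier1 (hgmem t h)⟩
      rwa [hge t h] at this
    obtain ⟨ta, tb, hta, htb, htab, hgap⟩ := exists_gap M
    have hσ := hgmem ta hta
    have hτ := hgmem tb htb
    have hστ : g ta < g tb := aux_mono hgc hgi hgmem hgs hta htb htab
    have habsσ : ‖((g ta : ℝ):ℂ)‖ < 1 := by rw [abs_ofReal_Ico hσ]; exact hσ.2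
    have habsτ : ‖((g tb : ℝ):ℂ)‖ < 1 := by rw [abs_ofReal_Ico hτ]; exact hτ.2
    have step1 : ufun ta ≤ Lfun (g ta) + M := by
      have h1 := g2_lb hta
      have h2 := dhyp_triangle0 habsσ (abs_g2_lt_one hta)
      have h3 := hdisp ta hta
      have h4 : dhyp 0 ((g ta : ℝ):ℂ) = Lfun (g ta) := by
        rw [dhyp_zero_left, abs_ofReal_Ico hσ]
      linarith
    have step2 : Lfun (g ta) ≤ Lfun (g tb) := Lfun_mono hσ.1 hστ.le hτ.2
    have step3 : Lfun (g tb) ≤ Real.log 4 + ufun tb + M := by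
      have h2 := dhyp_triangle0 (abs_g2_lt_one htb) habsτ
      have h3 := hdisp tb htb
      have h4 : dhyp (g2fun tb) ((g tb : ℝ):ℂ) = dhyp ((g tb : ℝ):ℂ) (g2fun tb) := dhyp_comm _ _
      have h5 : dhyp 0 ((g tb : ℝ):ℂ) = Lfun (g tb) := by
        rw [dhyp_zero_left, abs_ofReal_Ico hτ]
      have h6 := g2_ub htb
      linarith
    linarith

end
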